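/- arXiv:2011.02189 — 3 statements merged into one kernel-verified Lean document; each statement's English description precedes it below -/
import Mathlib

section
/- Let α ∈ (0,1], T > 0, and suppose constants m ∈ ℕ, l₂ ≥ 0 and matrix A ∈ ℝ^{n×n}, ρ > 0 satisfy κ := m·l₂ + (1 + ‖I − ρA‖)·T^α / Γ(α+1) < 1. Define the operator Φ on continuous functions x : [0,T] → ℝⁿ by (Φx)(t) = x₀ + Σ_{j=1}^{m} U_j(x(t_j)) − (1/Γ(α)) ∫₀ᵗ (t−s)^{α−1} x(s) ds + (1/Γ(α)) ∫₀ᵗ (t−s)^{α−1} P_K(x(s) − ρAx(s) − ρb) ds, where each U_j is l₂-Lipschitz and 0 < t₁ < ⋯ < t_m < T are fixed. Then Φ is a contraction with constant κ in the supremum norm. -/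
open MeasureTheory intervalIntegral
open scoped RealInnerProductSpace

section helpers

variable {E : Type*} [NormedAddCommGroup E]

/-- Metric projection onto a convex set is nonexpansive. -/
lemma proj_nonexpansive' [InnerProductSpace ℝ E] {K : Set E} (hKconv : Convex ℝ K)
    {P : E → E} (hP : ∀ y, P y ∈ K ∧ ∀ z ∈ K, ‖y - P y‖ ≤ ‖y - z‖) :
    ∀ u v, ‖P u - P v‖ ≤ ‖u - v‖ := by
  have key : ∀ u, ∀ z ∈ K, ⟪u - P u, z - P u⟫ ≤ 0 := by
    intro u z hz
    have hmem := (hP u).1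
    haveI : Nonempty K := ⟨⟨P u, hmem⟩⟩
    have heq : ‖u - P u‖ = ⨅ w : K, ‖u - w‖ := by
      refine le_antisymm (le_ciInf fun w => (hP u).2 w w.2) ?_
      have hbdd : BddBelow (Set.range fun w : K => ‖u - (w : E)‖) :=
        ⟨0, by rintro r ⟨w, rfl⟩; exact norm_nonneg _⟩
      exact ciInf_le hbdd ⟨P u, hmem⟩
    exact (norm_eq_iInf_iff_real_inner_le_zero hKconv hmem).1 heq z hz
  intro u v
  have h1 := key u (P v) (hP v).1
  have h2 := key v (P u) (hP u).1
  have hsq : ‖P u - P v‖ ^ 2 ≤ ⟪u - v, P u - P v⟫ := by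
    have expand : ⟪u - v, P u - P v⟫ - ‖P u - P v‖ ^ 2
        = - ⟪u - P u, P v - P u⟫ - ⟪v - P v, P u - P v⟫ := by
      rw [← real_inner_self_eq_norm_sq]
      simp only [inner_sub_left, inner_sub_right]
      ring
    nlinarith [h1, h2]
  have hle : ‖P u - P v‖ ^ 2 ≤ ‖u - v‖ * ‖P u - P v‖ :=
    hsq.trans (real_inner_le_norm _ _)
  nlinarith [norm_nonneg (P u - P v), norm_nonneg (u - v)]

variable [NormedSpace ℝ E]

lemma rpow_integrable' {t α : ℝ} (hα : 0 < α) :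
    IntervalIntegrable (fun s => (t - s) ^ (α - 1)) volume 0 t := by
  have h : IntervalIntegrable (fun x : ℝ => x ^ (α - 1)) volume t 0 :=
    intervalIntegral.intervalIntegrable_rpow' (by linarith)
  simpa using h.comp_sub_left t

lemma rpow_smul_integrable' {w : ℝ → E} {t T α : ℝ} (hα : 0 < α) (ht0 : 0 ≤ t) (htT : t ≤ T)
    (hw : ContinuousOn w (Set.Icc 0 T)) :
    IntervalIntegrable (fun s => ((t - s) ^ (α - 1)) • w s) volume 0 t := by
  obtain ⟨C, hC⟩ := isCompact_Icc.exists_bound_of_continuousOn hw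
  rw [intervalIntegrable_iff_integrableOn_Ioc_of_le ht0]
  have hsub : Set.Ioc (0:ℝ) t ⊆ Set.Icc 0 T := fun s hs => ⟨hs.1.le, hs.2.trans htT⟩
  have hg : IntegrableOn (fun s => (t - s) ^ (α - 1) * C) (Set.Ioc 0 t) volume := by
    rw [← intervalIntegrable_iff_integrableOn_Ioc_of_le ht0]
    exact (rpow_integrable' hα).mul_const C
  refine hg.mono' ?_ ?_
  · exact (((measurable_const.sub measurable_id).pow measurable_const).aestronglyMeasurable).smul
      ((hw.mono hsub).aestronglyMeasurable measurableSet_Ioc)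
  · rw [ae_restrict_iff' measurableSet_Ioc]
    filter_upwards with s hs
    have hts : 0 ≤ t - s := by linarith [hs.2]
    rw [norm_smul, Real.norm_eq_abs, abs_of_nonneg (Real.rpow_nonneg hts _)]
    exact mul_le_mul_of_nonneg_left (hC s (hsub hs)) (Real.rpow_nonneg hts _)

lemma rpow_integral_val' {t α : ℝ} (hα : 0 < α) (ht0 : 0 ≤ t) :
    (∫ s in (0:ℝ)..t, (t - s) ^ (α - 1)) = t ^ α / α := by
  rw [intervalIntegral.integral_comp_sub_left (fun x : ℝ => x ^ (α - 1)) t]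
  rw [sub_self, sub_zero, integral_rpow (Or.inl (by linarith))]
  rw [sub_add_cancel, Real.zero_rpow hα.ne', sub_zero]

lemma norm_rpow_integral_le' {w : ℝ → E} {t α C : ℝ} (hα : 0 < α) (ht0 : 0 ≤ t) (hC : 0 ≤ C)
    (hbnd : ∀ s ∈ Set.Ioc (0:ℝ) t, ‖w s‖ ≤ C) :
    ‖∫ s in (0:ℝ)..t, ((t - s) ^ (α - 1)) • w s‖ ≤ C * t ^ α / α := by
  have hg : IntervalIntegrable (fun s => (t - s) ^ (α - 1) * C) volume 0 t :=
    (rpow_integrable' hα).mul_const C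
  have hae : ∀ᵐ s ∂volume.restrict (Set.uIoc (0:ℝ) t),
      ‖((t - s) ^ (α - 1)) • w s‖ ≤ (t - s) ^ (α - 1) * C := by
    rw [ae_restrict_iff' measurableSet_uIoc]
    filter_upwards with s hs
    rw [Set.uIoc_of_le ht0] at hs
    have hts : 0 ≤ t - s := by linarith [hs.2]
    rw [norm_smul, Real.norm_eq_abs, abs_of_nonneg (Real.rpow_nonneg hts _)]
    exact mul_le_mul_of_nonneg_left (hbnd s hs) (Real.rpow_nonneg hts _)
  have h := intervalIntegral.norm_integral_le_of_norm_le ht0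
    (((ae_restrict_iff' measurableSet_uIoc).1 hae).mono fun s hs hs' =>
      hs (by rwa [Set.uIoc_of_le ht0])) hg
  have hval : (∫ s in (0:ℝ)..t, (t - s) ^ (α - 1) * C) = C * t ^ α / α := by
    rw [intervalIntegral.integral_mul_const, rpow_integral_val' hα ht0]
    ring
  rw [hval] at h
  exact h

end helpers

/-- The solution operator Φ of the impulsive fractional projection neural network. -/
noncomputable def phiOp (n m : ℕ) (α ρ : ℝ) (A : Matrix (Fin n) (Fin n) ℝ)
    (b x₀ : EuclideanSpace ℝ (Fin n))
    (P : EuclideanSpace ℝ (Fin n) → EuclideanSpace ℝ (Fin n))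
    (U : Fin m → EuclideanSpace ℝ (Fin n) → EuclideanSpace ℝ (Fin n))
    (tj : Fin m → ℝ) (x : ℝ → EuclideanSpace ℝ (Fin n)) (t : ℝ) :
    EuclideanSpace ℝ (Fin n) :=
  x₀ + (∑ j, U j (x (tj j)))
    - (1 / Real.Gamma α) • (∫ s in (0:ℝ)..t, ((t - s) ^ (α - 1)) • x s)
    + (1 / Real.Gamma α) •
        (∫ s in (0:ℝ)..t, ((t - s) ^ (α - 1)) •
          P (x s - ρ • (Matrix.toEuclideanCLM (𝕜 := ℝ) A) (x s) - ρ • b))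

set_option maxHeartbeats 1000000 in
/-- The operator Φ is a κ-contraction in the supremum norm on [0, T], where
κ = m·l₂ + (1 + ‖I − ρA‖)·T^α/Γ(α+1) < 1. -/
theorem stmt_5 (n m : ℕ) (α T l₂ ρ : ℝ) (hα : 0 < α) (hα1 : α ≤ 1) (hT : 0 < T)
    (hl₂ : 0 ≤ l₂) (hρ : 0 < ρ)
    (A : Matrix (Fin n) (Fin n) ℝ) (b x₀ : EuclideanSpace ℝ (Fin n))
    (K : Set (EuclideanSpace ℝ (Fin n)))
    (hKne : K.Nonempty) (hKc : IsClosed K) (hKconv : Convex ℝ K)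
    (P : EuclideanSpace ℝ (Fin n) → EuclideanSpace ℝ (Fin n))
    (hP : ∀ y, P y ∈ K ∧ ∀ z ∈ K, ‖y - P y‖ ≤ ‖y - z‖)
    (U : Fin m → EuclideanSpace ℝ (Fin n) → EuclideanSpace ℝ (Fin n))
    (hU : ∀ j u v, ‖U j u - U j v‖ ≤ l₂ * ‖u - v‖)
    (tj : Fin m → ℝ) (htj : StrictMono tj)
    (htj0 : ∀ j, 0 < tj j) (htjT : ∀ j, tj j < T)
    (κ : ℝ)
    (hκdef : κ = m * l₂ +
      (1 + ‖Matrix.toEuclideanCLM (𝕜 := ℝ) (n := Fin n) (1 - ρ • A)‖) *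
        T ^ α / Real.Gamma (α + 1))
    (hκ : κ < 1) :
    ∀ x y : ℝ → EuclideanSpace ℝ (Fin n),
      ContinuousOn x (Set.Icc 0 T) → ContinuousOn y (Set.Icc 0 T) →
      (⨆ t : Set.Icc (0:ℝ) T,
          ‖phiOp n m α ρ A b x₀ P U tj x t - phiOp n m α ρ A b x₀ P U tj y t‖) ≤
        κ * ⨆ t : Set.Icc (0:ℝ) T, ‖x t - y t‖ := by
  intro x y hx hy
  haveI : Nonempty (Set.Icc (0:ℝ) T) := ⟨⟨0, le_refl 0, hT.le⟩⟩
  set CLMA := Matrix.toEuclideanCLM (𝕜 := ℝ) A with hCLMA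
  set B := Matrix.toEuclideanCLM (𝕜 := ℝ) (n := Fin n) (1 - ρ • A) with hB
  set M := ⨆ t : Set.Icc (0:ℝ) T, ‖x ↑t - y ↑t‖ with hMdef
  have hGamma : 0 < Real.Gamma α := Real.Gamma_pos_of_pos hα
  have hGamma1 : Real.Gamma (α + 1) = α * Real.Gamma α := Real.Gamma_add_one hα.ne'
  have hGamma1pos : 0 < Real.Gamma (α + 1) := by rw [hGamma1]; positivity
  have hbdd : BddAbove (Set.range fun t : Set.Icc (0:ℝ) T => ‖x ↑t - y ↑t‖) := by
    obtain ⟨C, hC⟩ := isCompact_Icc.exists_bound_of_continuousOn (hx.sub hy)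
    exact ⟨C, by rintro r ⟨t, rfl⟩; exact hC t t.2⟩
  have hM : ∀ s ∈ Set.Icc (0:ℝ) T, ‖x s - y s‖ ≤ M := fun s hs =>
    le_ciSup hbdd (⟨s, hs⟩ : Set.Icc (0:ℝ) T)
  have hM0 : 0 ≤ M := le_trans (norm_nonneg _) (hM 0 ⟨le_refl 0, hT.le⟩)
  clear_value CLMA B M
  have hPne := proj_nonexpansive' hKconv hP
  have hPlip : LipschitzWith 1 P := by
    refine LipschitzWith.of_dist_le_mul fun u v => ?_
    rw [dist_eq_norm, dist_eq_norm]; simpa using hPne u v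
  -- the inner affine maps and their difference
  have hBapp : ∀ v : EuclideanSpace ℝ (Fin n), B v = v - ρ • CLMA v := by
    intro v
    rw [hB, hCLMA]
    simp only [_root_.map_sub, _root_.map_smul, _root_.map_one,
      ContinuousLinearMap.sub_apply, ContinuousLinearMap.smul_apply,
      ContinuousLinearMap.one_apply]
  have haff : ∀ s, (x s - ρ • CLMA (x s) - ρ • b) - (y s - ρ • CLMA (y s) - ρ • b)
      = B (x s - y s) := by
    intro s
    rw [hBapp, map_sub, smul_sub]
    abel
  have hPbnd : ∀ s ∈ Set.Icc (0:ℝ) T,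
      ‖P (x s - ρ • CLMA (x s) - ρ • b) - P (y s - ρ • CLMA (y s) - ρ • b)‖ ≤ ‖B‖ * M := by
    intro s hs
    refine (hPne _ _).trans ?_
    rw [haff s]
    refine (B.le_opNorm _).trans ?_
    exact mul_le_mul_of_nonneg_left (hM s hs) (norm_nonneg B)
  have hBM0 : 0 ≤ ‖B‖ * M := mul_nonneg (norm_nonneg _) hM0
  -- continuity of compositions
  have hcont : ∀ z : ℝ → EuclideanSpace ℝ (Fin n), ContinuousOn z (Set.Icc 0 T) →
      ContinuousOn (fun s => P (z s - ρ • CLMA (z s) - ρ • b)) (Set.Icc 0 T) := by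
    intro z hz
    refine hPlip.continuous.comp_continuousOn ?_
    exact (hz.sub ((CLMA.continuous.comp_continuousOn hz).const_smul ρ)).sub continuousOn_const
  -- pointwise bound
  have hpt : ∀ t ∈ Set.Icc (0:ℝ) T,
      ‖phiOp n m α ρ A b x₀ P U tj x t - phiOp n m α ρ A b x₀ P U tj y t‖ ≤ κ * M := by
    intro t ht
    obtain ⟨ht0, htT⟩ := ht
    have hi1 := rpow_smul_integrable' hα ht0 htT hx
    have hi2 := rpow_smul_integrable' hα ht0 htT hy
    have hi3 := rpow_smul_integrable' hα ht0 htT (hcont x hx)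
    have hi4 := rpow_smul_integrable' hα ht0 htT (hcont y hy)
    have hdiff : phiOp n m α ρ A b x₀ P U tj x t - phiOp n m α ρ A b x₀ P U tj y t
        = (∑ j, (U j (x (tj j)) - U j (y (tj j))))
          - (1 / Real.Gamma α) • (∫ s in (0:ℝ)..t, ((t - s) ^ (α - 1)) • (x s - y s))
          + (1 / Real.Gamma α) • (∫ s in (0:ℝ)..t, ((t - s) ^ (α - 1)) •
              (P (x s - ρ • CLMA (x s) - ρ • b) - P (y s - ρ • CLMA (y s) - ρ • b))) := by
      simp only [phiOp, smul_sub, Finset.sum_sub_distrib, ← hCLMA]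
      rw [intervalIntegral.integral_sub hi1 hi2, intervalIntegral.integral_sub hi3 hi4,
        smul_sub, smul_sub]
      abel
    rw [hdiff]
    have hS : ‖∑ j, (U j (x (tj j)) - U j (y (tj j)))‖ ≤ m * l₂ * M := by
      refine (norm_sum_le _ _).trans ?_
      have : ∀ j : Fin m, ‖U j (x (tj j)) - U j (y (tj j))‖ ≤ l₂ * M := fun j =>
        (hU j _ _).trans (mul_le_mul_of_nonneg_left
          (hM (tj j) ⟨(htj0 j).le, (htjT j).le⟩) hl₂)
      refine (Finset.sum_le_sum fun j _ => this j).trans ?_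
      simp [Finset.sum_const, Finset.card_univ, mul_assoc]
    have hI1 : ‖∫ s in (0:ℝ)..t, ((t - s) ^ (α - 1)) • (x s - y s)‖ ≤ M * t ^ α / α :=
      norm_rpow_integral_le' hα ht0 hM0 fun s hs =>
        hM s ⟨hs.1.le, hs.2.trans htT⟩
    have hI2 : ‖∫ s in (0:ℝ)..t, ((t - s) ^ (α - 1)) •
        (P (x s - ρ • CLMA (x s) - ρ • b) - P (y s - ρ • CLMA (y s) - ρ • b))‖
        ≤ (‖B‖ * M) * t ^ α / α :=
      norm_rpow_integral_le' hα ht0 hBM0 fun s hs =>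
        hPbnd s ⟨hs.1.le, hs.2.trans htT⟩
    have htα : t ^ α ≤ T ^ α := Real.rpow_le_rpow ht0 htT hα.le
    have hTα : 0 ≤ t ^ α := Real.rpow_nonneg ht0 α
    have hnorm : ‖(1 / Real.Gamma α)‖ = 1 / Real.Gamma α := by
      rw [Real.norm_eq_abs, abs_of_pos (by positivity)]
    calc ‖(∑ j, (U j (x (tj j)) - U j (y (tj j))))
          - (1 / Real.Gamma α) • (∫ s in (0:ℝ)..t, ((t - s) ^ (α - 1)) • (x s - y s))
          + (1 / Real.Gamma α) • (∫ s in (0:ℝ)..t, ((t - s) ^ (α - 1)) •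
              (P (x s - ρ • CLMA (x s) - ρ • b) - P (y s - ρ • CLMA (y s) - ρ • b)))‖
        ≤ ‖(∑ j, (U j (x (tj j)) - U j (y (tj j))))
            - (1 / Real.Gamma α) • (∫ s in (0:ℝ)..t, ((t - s) ^ (α - 1)) • (x s - y s))‖
          + ‖(1 / Real.Gamma α) • (∫ s in (0:ℝ)..t, ((t - s) ^ (α - 1)) •
              (P (x s - ρ • CLMA (x s) - ρ • b) - P (y s - ρ • CLMA (y s) - ρ • b)))‖ :=
          norm_add_le _ _
      _ ≤ (m * l₂ * M + (1 / Real.Gamma α) * (M * t ^ α / α))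
          + (1 / Real.Gamma α) * ((‖B‖ * M) * t ^ α / α) := by
          have c0 : (0:ℝ) ≤ 1 / Real.Gamma α := by positivity
          refine add_le_add (le_trans (norm_sub_le _ _) (add_le_add hS ?_)) ?_
          · rw [norm_smul, hnorm]; exact mul_le_mul_of_nonneg_left hI1 c0
          · rw [norm_smul, hnorm]; exact mul_le_mul_of_nonneg_left hI2 c0
      _ ≤ κ * M := by
          have h1 : (1 / Real.Gamma α) * (M * t ^ α / α) = M * t ^ α / Real.Gamma (α + 1) := by
            rw [hGamma1]; ring
          have h2 : (1 / Real.Gamma α) * ((‖B‖ * M) * t ^ α / α)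
              = ‖B‖ * M * t ^ α / Real.Gamma (α + 1) := by
            rw [hGamma1]; ring
          rw [h1, h2, hκdef]
          have hBn : (0:ℝ) ≤ ‖B‖ := norm_nonneg _
          have key : M * t ^ α ≤ M * T ^ α := mul_le_mul_of_nonneg_left htα hM0
          have key2 : ‖B‖ * M * t ^ α ≤ ‖B‖ * M * T ^ α :=
            mul_le_mul_of_nonneg_left htα hBM0
          have expand : (↑m * l₂ + (1 + ‖B‖) * T ^ α / Real.Gamma (α + 1)) * M
              = ↑m * l₂ * M + ((1 + ‖B‖) * T ^ α * M) / Real.Gamma (α + 1) := by ring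
          rw [expand]
          have hcomb : M * t ^ α / Real.Gamma (α + 1) + ‖B‖ * M * t ^ α / Real.Gamma (α + 1)
              ≤ (1 + ‖B‖) * T ^ α * M / Real.Gamma (α + 1) := by
            rw [← add_div]
            refine (div_le_div_iff_of_pos_right hGamma1pos).2 ?_
            have hr : (1 + ‖B‖) * T ^ α * M = M * T ^ α + ‖B‖ * M * T ^ α := by ring
            rw [hr]
            linarith
          linarith
  refine ciSup_le fun t => hpt t t.2
end

section
/- Let α ∈ (0,1] and x : [0,T] → ℝⁿ continuous. If ‖x(t)‖ ≤ C₀ + (L/Γ(α)) ∫₀ᵗ (t−s)^{α−1} ‖x(s)‖ ds + (D/Γ(α+1)) t^α for all t ∈ [0,T], where C₀, L, D ≥ 0, then ‖x(t)‖ ≤ (C₀ + D·t^α/Γ(α+1)) · E_α(L·t^α) for all t ∈ [0,T], where E_α(z) = Σ_{k≥0} z^k / Γ(αk + 1) is the Mittag-Leffler function. -/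
open intervalIntegral MeasureTheory Set Filter

lemma betaReal {a b t : ℝ} (ha : 0 < a) (hb : 0 < b) (ht : 0 < t) :
    ∫ s in (0:ℝ)..t, s ^ (a-1) * (t - s) ^ (b-1)
      = Real.Gamma a * Real.Gamma b / Real.Gamma (a+b) * t ^ (a+b-1) := by
  have h1 := Complex.betaIntegral_scaled (a : ℂ) (b : ℂ) ht
  have h2 := Complex.Gamma_mul_Gamma_eq_betaIntegral (s := (a:ℂ)) (t := (b:ℂ))
    (by simpa using ha) (by simpa using hb)
  have hG : Complex.Gamma ((a:ℂ) + b) ≠ 0 := by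
    rw [(by push_cast; ring : ((a:ℂ) + b) = ((a + b : ℝ) : ℂ)), Complex.Gamma_ofReal]
    exact_mod_cast (Real.Gamma_pos_of_pos (by linarith)).ne'
  have hB : Complex.betaIntegral a b
      = Complex.Gamma a * Complex.Gamma b / Complex.Gamma ((a:ℂ)+b) := by
    field_simp [h2]
    rw [h2]; ring
  -- identify the complex integral with the real one
  have h3 : (∫ s in (0:ℝ)..t, (s:ℂ) ^ ((a:ℂ) - 1) * ((t:ℂ) - s) ^ ((b:ℂ) - 1))
      = ((∫ s in (0:ℝ)..t, s ^ (a-1) * (t - s) ^ (b-1) : ℝ) : ℂ) := by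
    rw [← intervalIntegral.integral_ofReal]
    refine intervalIntegral.integral_congr (fun s hs => ?_)
    rw [Set.uIcc_of_le ht.le] at hs
    rw [Complex.ofReal_mul, Complex.ofReal_cpow hs.1, Complex.ofReal_cpow (by linarith [hs.2])]
    push_cast
    ring
  rw [h3, hB] at h1
  have h4 : ((t:ℂ)) ^ ((a:ℂ) + b - 1) = ((t ^ (a+b-1) : ℝ) : ℂ) := by
    rw [Complex.ofReal_cpow ht.le]
    push_cast; ring_nf
  rw [h4] at h1
  have := congrArg Complex.re h1
  rw [mul_comm]
  simpa [Complex.Gamma_ofReal, ← Complex.ofReal_mul, ← Complex.ofReal_add, ← Complex.ofReal_div,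
    (by push_cast; ring : ((a:ℂ) + b) = ((a + b : ℝ) : ℂ))] using this

-- continuity of s ↦ s^p for p ≥ 0
lemma cont_rpow {p : ℝ} (hp : 0 ≤ p) : Continuous fun s : ℝ => s ^ p := by
  rcases eq_or_lt_of_le hp with h | h
  · simpa [← h] using continuous_const.congr fun s => (Real.rpow_zero s).symm
  · exact continuous_iff_continuousAt.2 fun s => Real.continuousAt_rpow_const s p (Or.inr hp)

lemma integrable_kernel {t α : ℝ} (ht : 0 ≤ t) (hα : 0 < α) {f : ℝ → ℝ}
    (hf : ContinuousOn f (Set.Icc 0 t)) :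
    IntervalIntegrable (fun s => (t - s) ^ (α - 1) * f s) volume 0 t := by
  obtain ⟨M, hM⟩ : ∃ M, ∀ s ∈ Set.Icc (0:ℝ) t, |f s| ≤ M := by
    obtain ⟨M, hM⟩ := (isCompact_Icc.image_of_continuousOn hf).isBounded.subset_ball 0
    exact ⟨M, fun s hs => by
      have := hM (Set.mem_image_of_mem f hs)
      simpa [Real.norm_eq_abs, abs_le] using (mem_ball_zero_iff.1 this).le⟩
  have hM0 : 0 ≤ M := le_trans (abs_nonneg _) (hM 0 (Set.left_mem_Icc.2 ht))
  have hker : IntervalIntegrable (fun s => (t - s) ^ (α - 1)) volume 0 t := by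
    have := (intervalIntegrable_rpow' (a := 0) (b := t) (r := α - 1) (by linarith)).comp_sub_left t
    simpa using this.symm
  have hkerM : IntervalIntegrable (fun s => (t - s) ^ (α - 1) * M) volume 0 t :=
    hker.mul_const M
  refine hkerM.mono_fun ?_ ?_
  · apply AEStronglyMeasurable.mul
    · have := hker.aestronglyMeasurable
      rwa [Set.uIoc_of_le ht]
    · exact (hf.mono (by rw [Set.uIoc_of_le ht]; exact Set.Ioc_subset_Icc_self)).aestronglyMeasurable
        (by rw [Set.uIoc_of_le ht]; exact measurableSet_Ioc)
  · filter_upwards [ae_restrict_mem measurableSet_uIoc] with s hs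
    rw [Set.uIoc_of_le ht] at hs
    have h1 : (0:ℝ) ≤ (t - s) ^ (α - 1) := Real.rpow_nonneg (by linarith [hs.2]) _
    rw [Real.norm_eq_abs, Real.norm_eq_abs, abs_mul, abs_mul, abs_of_nonneg h1]
    exact mul_le_mul_of_nonneg_left
      (le_trans (hM s ⟨hs.1.le, hs.2⟩) (le_abs_self M)) h1


lemma kernel_integral {t α p : ℝ} (ht : 0 ≤ t) (hα : 0 < α) (hp : 0 ≤ p) :
    ∫ s in (0:ℝ)..t, (t - s) ^ (α - 1) * s ^ p
      = Real.Gamma α * Real.Gamma (p+1) / Real.Gamma (α + p + 1) * t ^ (α + p) := by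
  rcases eq_or_lt_of_le ht with h | h
  · rw [← h]
    simp [Real.zero_rpow (by positivity : α + p ≠ 0)]
  · have hb := betaReal (a := p+1) (b := α) (t := t) (by linarith) hα h
    have e1 : ∀ s : ℝ, s ^ (p+1-1) * (t - s) ^ (α-1) = (t - s) ^ (α - 1) * s ^ p := by
      intro s; rw [show p+1-1 = p by ring]; ring
    simp only [e1] at hb
    rw [hb]
    rw [show p+1+α-1 = α + p by ring, show p+1+α = α+p+1 by ring]
    ring

lemma Gamma_superadd {a b : ℝ} (ha : 0 ≤ a) (hb : 0 ≤ b) :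
    Real.Gamma (a+1) * Real.Gamma (b+1) ≤ Real.Gamma (a+b+1) := by
  rcases eq_or_lt_of_le ha with h | h
  · simp [← h, Real.Gamma_one]
  rcases eq_or_lt_of_le hb with h' | h'
  · simp [← h', Real.Gamma_one]
  set s := a + b with hs
  have hspos : 0 < s := by positivity
  have key : ∀ c d : ℝ, 0 < c → 0 < d → c + d = s →
      Real.log (Real.Gamma (c+1)) ≤ (c/s) * Real.log (Real.Gamma (s+1)) := by
    intro c d hc hd hcd
    have h2 := Real.convexOn_log_Gamma.2 (Set.mem_Ioi.2 one_pos)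
      (Set.mem_Ioi.2 (by linarith : (0:ℝ) < s + 1))
      (by positivity : (0:ℝ) ≤ d/s) (by positivity : (0:ℝ) ≤ c/s)
      (by field_simp; linarith)
    have e : (d/s) • (1:ℝ) + (c/s) • (s+1) = c + 1 := by
      simp only [smul_eq_mul]
      have e1 : d/s + c/s = 1 := by rw [← add_div, add_comm, hcd, div_self hspos.ne']
      have e2 : c/s*s = c := div_mul_cancel₀ c hspos.ne'
      linear_combination e1 + e2
    rw [e] at h2
    simpa [Real.Gamma_one, smul_eq_mul] using h2
  have k1 := key a b h h' rfl
  have k2 := key b a h' h (by linarith)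
  have hΓ1 : 0 < Real.Gamma (a+1) := Real.Gamma_pos_of_pos (by linarith)
  have hΓ2 : 0 < Real.Gamma (b+1) := Real.Gamma_pos_of_pos (by linarith)
  have hΓ3 : 0 < Real.Gamma (s+1) := Real.Gamma_pos_of_pos (by linarith)
  have : Real.log (Real.Gamma (a+1) * Real.Gamma (b+1)) ≤ Real.log (Real.Gamma (s+1)) := by
    rw [Real.log_mul hΓ1.ne' hΓ2.ne']
    have : (a/s) * Real.log (Real.Gamma (s+1)) + (b/s) * Real.log (Real.Gamma (s+1))
        = Real.log (Real.Gamma (s+1)) := by field_simp; ring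
    linarith
  exact (Real.log_le_log_iff (by positivity) hΓ3).1 this

lemma Gamma_ratio {α x : ℝ} (hα : 0 < α) (hα1 : α ≤ 1) (hx : 1 ≤ x) :
    Real.Gamma x * (x + α - 1) ^ α ≤ Real.Gamma (x + α) := by
  have h1 : (0:ℝ) < x + α - 1 := by linarith
  have h2 : Real.Gamma (x + α) = (x + α - 1) * Real.Gamma (x + α - 1) := by
    have := Real.Gamma_add_one (s := x + α - 1) h1.ne'
    rw [show x + α - 1 + 1 = x + α by ring] at this
    exact this
  have hconv := Real.convexOn_log_Gamma.2 (Set.mem_Ioi.2 h1)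
    (Set.mem_Ioi.2 (by linarith : (0:ℝ) < x + α)) hα.le
    (show (0:ℝ) ≤ 1 - α by linarith) (show α + (1 - α) = 1 by ring)
  have e : α • (x + α - 1) + (1 - α) • (x + α) = x := by simp [smul_eq_mul]; ring
  rw [e] at hconv
  simp only [Function.comp_apply, smul_eq_mul] at hconv
  have hΓ : 0 < Real.Gamma (x + α) := Real.Gamma_pos_of_pos (by linarith)
  have hΓ' : 0 < Real.Gamma (x + α - 1) := Real.Gamma_pos_of_pos h1
  have hlog : Real.log (Real.Gamma (x + α - 1))
      = Real.log (Real.Gamma (x + α)) - Real.log (x + α - 1) := by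
    rw [h2, Real.log_mul h1.ne' hΓ'.ne']; ring
  rw [hlog] at hconv
  -- hconv : log Γ x ≤ α (logΓ(x+α) - log(x+α-1)) + (1-α) logΓ(x+α)
  have hlog2 : Real.log (Real.Gamma x) + α * Real.log (x + α - 1)
      ≤ Real.log (Real.Gamma (x + α)) := by nlinarith [hconv]
  have hΓx : 0 < Real.Gamma x := Real.Gamma_pos_of_pos (by linarith)
  have : Real.log (Real.Gamma x * (x + α - 1) ^ α) ≤ Real.log (Real.Gamma (x + α)) := by
    rw [Real.log_mul hΓx.ne' (by positivity), Real.log_rpow h1]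
    linarith
  exact (Real.log_le_log_iff (by positivity) hΓ).1 this

lemma ML_summable {α z : ℝ} (hα : 0 < α) (hα1 : α ≤ 1) (hz : 0 ≤ z) :
    Summable (fun k : ℕ => z ^ k / Real.Gamma (α * k + 1)) := by
  apply summable_of_ratio_norm_eventually_le (r := 1/2) (by norm_num)
  have htend : Tendsto (fun k : ℕ => (α * k + α) ^ α) atTop atTop := by
    apply (tendsto_rpow_atTop hα).comp
    apply tendsto_atTop_add_const_right
    exact (tendsto_natCast_atTop_atTop (R := ℝ)).const_mul_atTop hα
  filter_upwards [htend.eventually_ge_atTop (2 * z)] with k hk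
  have hαk : (0:ℝ) ≤ α * k := mul_nonneg hα.le (Nat.cast_nonneg _)
  have hx : (1:ℝ) ≤ α * k + 1 := by linarith
  have hr := Gamma_ratio hα hα1 hx
  rw [show α * k + 1 + α - 1 = α * k + α by ring] at hr
  have hstep : 2 * z * Real.Gamma (α * k + 1) ≤ Real.Gamma (α * k + 1 + α) := by
    calc 2 * z * Real.Gamma (α * k + 1)
        ≤ (α * k + α) ^ α * Real.Gamma (α * k + 1) := by
          apply mul_le_mul_of_nonneg_right hk (Real.Gamma_pos_of_pos (by positivity)).le
      _ ≤ Real.Gamma (α * k + 1 + α) := by linarith [hr]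
  have hΓa : 0 < Real.Gamma (α * k + 1) := Real.Gamma_pos_of_pos (by positivity)
  have hΓb : 0 < Real.Gamma (α * (k+1) + 1) := Real.Gamma_pos_of_pos (by positivity)
  have heq : α * ((k:ℝ)+1) + 1 = α * k + 1 + α := by ring
  rw [Real.norm_eq_abs, Real.norm_eq_abs, abs_div, abs_div, abs_of_nonneg (by positivity : (0:ℝ) ≤ z ^ (k+1)), abs_of_nonneg (by positivity : (0:ℝ) ≤ z ^ k)]
  push_cast
  rw [heq, abs_of_pos (heq ▸ hΓb), abs_of_pos hΓa]
  rw [show (1/2) * (z^k / Real.Gamma (α*(k:ℝ)+1)) = z^k / (2 * Real.Gamma (α*(k:ℝ)+1)) by ring]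
  rw [div_le_div_iff₀ (heq ▸ hΓb) (by positivity)]
  nlinarith [mul_le_mul_of_nonneg_left hstep (pow_nonneg hz k), pow_succ z k]

section helpers

lemma step_eval {α t : ℝ} (hα : 0 < α) (ht : 0 ≤ t) {p : ℝ} (hp : 0 ≤ p) (c : ℝ) :
    ∫ s in (0:ℝ)..t, (t - s) ^ (α - 1) * (c * s ^ p / Real.Gamma (p + 1))
      = Real.Gamma α * (c * t ^ (α + p) / Real.Gamma (α + p + 1)) := by
  have e : ∀ s : ℝ, (t - s) ^ (α - 1) * (c * s ^ p / Real.Gamma (p + 1))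
      = (c / Real.Gamma (p + 1)) * ((t - s) ^ (α - 1) * s ^ p) := fun s => by ring
  simp only [e]
  rw [intervalIntegral.integral_const_mul, kernel_integral ht hα hp]
  have h1 : Real.Gamma (p + 1) ≠ 0 := (Real.Gamma_pos_of_pos (by linarith)).ne'
  have h2 : Real.Gamma (α + p + 1) ≠ 0 := (Real.Gamma_pos_of_pos (by linarith)).ne'
  field_simp

lemma big_eval {α t : ℝ} (hα : 0 < α) (ht : 0 ≤ t) (f q : ℕ → ℝ) (hq : ∀ k, 0 ≤ q k)
    (N : ℕ) :
    ∫ s in (0:ℝ)..t, (t - s) ^ (α - 1)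
        * (∑ k ∈ Finset.range N, f k * s ^ (q k) / Real.Gamma (q k + 1))
      = Real.Gamma α * ∑ k ∈ Finset.range N, f k * t ^ (α + q k) / Real.Gamma (α + q k + 1) := by
  have e : ∀ s : ℝ, (t - s) ^ (α - 1)
        * (∑ k ∈ Finset.range N, f k * s ^ (q k) / Real.Gamma (q k + 1))
      = ∑ k ∈ Finset.range N, (t - s) ^ (α - 1) * (f k * s ^ (q k) / Real.Gamma (q k + 1)) :=
    fun s => Finset.mul_sum _ _ _
  simp only [e]
  rw [intervalIntegral.integral_finset_sum, Finset.mul_sum]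
  · exact Finset.sum_congr rfl fun k _ => step_eval hα ht (hq k) (f k)
  · intro k _
    exact integrable_kernel ht hα
      (((continuous_const.mul (cont_rpow (hq k))).div_const _).continuousOn)

lemma int_sum (α t : ℝ) (hα : 0 < α) (ht : 0 ≤ t) (f q : ℕ → ℝ) (hq : ∀ k, 0 ≤ q k) (N : ℕ) :
    IntervalIntegrable (fun s => (t - s) ^ (α - 1)
      * (∑ k ∈ Finset.range N, f k * s ^ (q k) / Real.Gamma (q k + 1))) volume 0 t :=
  integrable_kernel ht hα (Continuous.continuousOn (by
    exact continuous_finset_sum _ fun k _ =>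
      (continuous_const.mul (cont_rpow (hq k))).div_const _))
end helpers




/-- The one-parameter Mittag-Leffler function E_α(z) = Σ_{k≥0} z^k/Γ(αk+1). -/
noncomputable def mittagLeffler (α z : ℝ) : ℝ :=
  ∑' k : ℕ, z ^ k / Real.Gamma (α * k + 1)

/-- Fractional Gronwall inequality: if
‖x(t)‖ ≤ C₀ + (L/Γ(α))∫₀ᵗ(t−s)^{α−1}‖x(s)‖ds + (D/Γ(α+1))t^α on [0,T],
then ‖x(t)‖ ≤ (C₀ + D t^α/Γ(α+1))·E_α(L t^α) on [0,T]. -/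
theorem stmt_6 (n : ℕ) (α T C₀ L D : ℝ) (hα : 0 < α) (hα1 : α ≤ 1) (hT : 0 < T)
    (hC₀ : 0 ≤ C₀) (hL : 0 ≤ L) (hD : 0 ≤ D)
    (x : ℝ → EuclideanSpace ℝ (Fin n)) (hx : ContinuousOn x (Set.Icc 0 T))
    (hineq : ∀ t ∈ Set.Icc (0:ℝ) T,
      ‖x t‖ ≤ C₀ + (L / Real.Gamma α) * (∫ s in (0:ℝ)..t, (t - s) ^ (α - 1) * ‖x s‖)
        + (D / Real.Gamma (α + 1)) * t ^ α) :
    ∀ t ∈ Set.Icc (0:ℝ) T,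
      ‖x t‖ ≤ (C₀ + D * t ^ α / Real.Gamma (α + 1)) * mittagLeffler α (L * t ^ α) := by
  have hΓα : 0 < Real.Gamma α := Real.Gamma_pos_of_pos hα
  obtain ⟨M, hM⟩ : ∃ M, ∀ s ∈ Set.Icc (0:ℝ) T, ‖x s‖ ≤ M :=
    isCompact_Icc.exists_bound_of_continuousOn hx
  have hM0 : 0 ≤ M := le_trans (norm_nonneg _) (hM 0 ⟨le_rfl, hT.le⟩)
  -- the key iterated bound
  have key : ∀ N : ℕ, ∀ t ∈ Set.Icc (0:ℝ) T, ‖x t‖ ≤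
      (∑ k ∈ Finset.range N, (C₀ * L ^ k) * t ^ (α * k) / Real.Gamma (α * k + 1))
      + (∑ k ∈ Finset.range N, (D * L ^ k) * t ^ (α * (k + 1)) / Real.Gamma (α * (k + 1) + 1))
      + (M * L ^ N) * t ^ (α * N) / Real.Gamma (α * N + 1) := by
    intro N
    induction N with
    | zero =>
      intro t ht
      simpa using hM t ht
    | succ N ih =>
      intro t ht
      obtain ⟨ht0, htT⟩ := ht
      have hq1 : ∀ k : ℕ, (0:ℝ) ≤ α * k := fun k => mul_nonneg hα.le (Nat.cast_nonneg _)
      have hq2 : ∀ k : ℕ, (0:ℝ) ≤ α * (k + 1) := fun k => by positivity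
      -- bound the integral using ih
      set S1 : ℝ → ℝ := fun s =>
        ∑ k ∈ Finset.range N, (C₀ * L ^ k) * s ^ (α * k) / Real.Gamma (α * k + 1) with hS1
      set S2 : ℝ → ℝ := fun s =>
        ∑ k ∈ Finset.range N, (D * L ^ k) * s ^ (α * (k + 1)) / Real.Gamma (α * (k + 1) + 1)
        with hS2
      set S3 : ℝ → ℝ := fun s =>
        ∑ k ∈ Finset.range 1, (M * L ^ N) * s ^ (α * N) / Real.Gamma (α * N + 1) with hS3
      have hS3e : ∀ s : ℝ, S3 s = (M * L ^ N) * s ^ (α * N) / Real.Gamma (α * N + 1) := by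
        intro s; simp [hS3]
      have hint1 : IntervalIntegrable (fun s => (t - s) ^ (α - 1) * ‖x s‖) volume 0 t :=
        integrable_kernel ht0 hα ((hx.mono (Set.Icc_subset_Icc le_rfl htT)).norm)
      have i1 := int_sum α t hα ht0 (fun k => C₀ * L ^ k) (fun k => α * k) hq1 N
      have i2 := int_sum α t hα ht0 (fun k => D * L ^ k) (fun k => α * (k + 1)) hq2 N
      have i3 := int_sum α t hα ht0 (fun _ => M * L ^ N) (fun _ => α * N) (fun _ => hq1 N) 1
      have hint2 : IntervalIntegrable (fun s => (t - s) ^ (α - 1) * (S1 s + S2 s + S3 s))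
          volume 0 t := by
        have e : ∀ s : ℝ, (t - s) ^ (α - 1) * (S1 s + S2 s + S3 s)
            = (t - s) ^ (α - 1) * S1 s + (t - s) ^ (α - 1) * S2 s
              + (t - s) ^ (α - 1) * S3 s := fun s => by ring
        simp only [e]
        exact (i1.add i2).add i3
      have hmono : (∫ s in (0:ℝ)..t, (t - s) ^ (α - 1) * ‖x s‖)
          ≤ ∫ s in (0:ℝ)..t, (t - s) ^ (α - 1) * (S1 s + S2 s + S3 s) := by
        apply intervalIntegral.integral_mono_on ht0 hint1 hint2
        intro s hs
        have hker : (0:ℝ) ≤ (t - s) ^ (α - 1) := Real.rpow_nonneg (by linarith [hs.2]) _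
        apply mul_le_mul_of_nonneg_left _ hker
        have := ih s ⟨hs.1, hs.2.trans htT⟩
        simpa [hS1, hS2, hS3e] using this
      -- evaluate the integral of the bound
      have heval : (∫ s in (0:ℝ)..t, (t - s) ^ (α - 1) * (S1 s + S2 s + S3 s))
          = Real.Gamma α *
            ((∑ k ∈ Finset.range N, (C₀ * L ^ k) * t ^ (α + α * k) / Real.Gamma (α + α * k + 1))
            + (∑ k ∈ Finset.range N,
                (D * L ^ k) * t ^ (α + α * (k + 1)) / Real.Gamma (α + α * (k + 1) + 1))
            + (M * L ^ N) * t ^ (α + α * N) / Real.Gamma (α + α * N + 1)) := by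
        have e : ∀ s : ℝ, (t - s) ^ (α - 1) * (S1 s + S2 s + S3 s)
            = (t - s) ^ (α - 1) * S1 s + (t - s) ^ (α - 1) * S2 s
              + (t - s) ^ (α - 1) * S3 s := fun s => by ring
        simp only [e]
        rw [intervalIntegral.integral_add (i1.add i2) i3, intervalIntegral.integral_add i1 i2]
        rw [big_eval hα ht0 _ _ hq1 N, big_eval hα ht0 _ _ hq2 N,
          big_eval hα ht0 (fun _ => M * L ^ N) (fun _ => α * N) (fun _ => hq1 N) 1]
        simp [mul_add]
      -- combine
      have h1 := hineq t ⟨ht0, htT⟩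
      have h2 : ‖x t‖ ≤ C₀ + (L / Real.Gamma α) * (Real.Gamma α *
            ((∑ k ∈ Finset.range N, (C₀ * L ^ k) * t ^ (α + α * k) / Real.Gamma (α + α * k + 1))
            + (∑ k ∈ Finset.range N,
                (D * L ^ k) * t ^ (α + α * (k + 1)) / Real.Gamma (α + α * (k + 1) + 1))
            + (M * L ^ N) * t ^ (α + α * N) / Real.Gamma (α + α * N + 1)))
          + (D / Real.Gamma (α + 1)) * t ^ α := by
        rw [← heval]
        have := mul_le_mul_of_nonneg_left hmono (div_nonneg hL hΓα.le)
        linarith [h1]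
      rw [show L / Real.Gamma α * (Real.Gamma α *
            ((∑ k ∈ Finset.range N, (C₀ * L ^ k) * t ^ (α + α * k) / Real.Gamma (α + α * k + 1))
            + (∑ k ∈ Finset.range N,
                (D * L ^ k) * t ^ (α + α * (k + 1)) / Real.Gamma (α + α * (k + 1) + 1))
            + (M * L ^ N) * t ^ (α + α * N) / Real.Gamma (α + α * N + 1)))
          = L * ((∑ k ∈ Finset.range N, (C₀ * L ^ k) * t ^ (α + α * k) / Real.Gamma (α + α * k + 1))
            + (∑ k ∈ Finset.range N,
                (D * L ^ k) * t ^ (α + α * (k + 1)) / Real.Gamma (α + α * (k + 1) + 1))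
            + (M * L ^ N) * t ^ (α + α * N) / Real.Gamma (α + α * N + 1))
        from by field_simp] at h2
      refine le_trans h2 (le_of_eq ?_)
      -- now a pure algebraic identity between finite sums
      rw [Finset.sum_range_succ' (fun k => (C₀ * L ^ k) * t ^ (α * k) / Real.Gamma (α * k + 1)) N,
        Finset.sum_range_succ' (fun k =>
          (D * L ^ k) * t ^ (α * (k + 1)) / Real.Gamma (α * (k + 1) + 1)) N]
      have ec : ∀ k ∈ Finset.range N,
          (C₀ * L ^ (k+1)) * t ^ (α * ((k:ℝ)+1)) / Real.Gamma (α * ((k:ℝ)+1) + 1)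
          = L * ((C₀ * L ^ k) * t ^ (α + α * k) / Real.Gamma (α + α * k + 1)) := by
        intro k _
        rw [show α * ((k:ℝ)+1) = α + α * k by ring]
        ring
      have ed : ∀ k ∈ Finset.range N,
          (D * L ^ (k+1)) * t ^ (α * (((k:ℝ)+1) + 1)) / Real.Gamma (α * (((k:ℝ)+1) + 1) + 1)
          = L * ((D * L ^ k) * t ^ (α + α * ((k:ℝ) + 1)) / Real.Gamma (α + α * ((k:ℝ) + 1) + 1)) := by
        intro k _
        rw [show α * (((k:ℝ)+1)+1) = α + α * ((k:ℝ)+1) by ring]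
        ring
      push_cast
      rw [Finset.sum_congr rfl ec, Finset.sum_congr rfl ed]
      rw [show α * (((N:ℝ))+1) = α + α * N by ring]
      rw [← Finset.mul_sum, ← Finset.mul_sum]
      rw [show α * ((0:ℝ) + 1) = α by ring]
      simp only [Real.rpow_zero, mul_zero, Real.Gamma_one, pow_zero, zero_add, mul_one, one_mul]
      ring
  -- conclusion: pass to the limit
  intro t ht
  obtain ⟨ht0, htT⟩ := ht
  have hΓα1 : 0 < Real.Gamma (α + 1) := Real.Gamma_pos_of_pos (by linarith)
  rcases eq_or_lt_of_le ht0 with rfl | htpos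
  · -- t = 0
    have hML : mittagLeffler α (L * (0:ℝ) ^ α) = 1 := by
      rw [Real.zero_rpow hα.ne', mul_zero, mittagLeffler]
      rw [tsum_eq_single 0 (fun k hk => by simp [zero_pow hk])]
      norm_num [Real.Gamma_one]
    rw [hML, Real.zero_rpow hα.ne']
    have h0 := hineq 0 ⟨le_rfl, hT.le⟩
    simpa [Real.zero_rpow hα.ne'] using h0
  · set z := L * t ^ α with hz
    have hz0 : 0 ≤ z := mul_nonneg hL (Real.rpow_nonneg ht0 _)
    have hsum := ML_summable hα hα1 hz0
    have hnonneg : ∀ k : ℕ, 0 ≤ z ^ k / Real.Gamma (α * k + 1) := fun k =>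
      div_nonneg (pow_nonneg hz0 k)
        (Real.Gamma_pos_of_pos (by positivity : (0:ℝ) < α * k + 1)).le
    have hMLnn : 0 ≤ mittagLeffler α z := tsum_nonneg hnonneg
    have hzp : ∀ k : ℕ, L ^ k * t ^ (α * (k:ℝ)) = z ^ k := by
      intro k
      rw [hz, mul_pow, Real.rpow_mul ht0, Real.rpow_natCast]
    have hps : ∀ N : ℕ, ∑ k ∈ Finset.range N, z ^ k / Real.Gamma (α * k + 1)
        ≤ mittagLeffler α z := fun N =>
      hsum.sum_le_tsum _ (fun k _ => hnonneg k)
    have hbound : ∀ N : ℕ, ‖x t‖ ≤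
        (C₀ + D * t ^ α / Real.Gamma (α + 1)) * mittagLeffler α z
          + M * (z ^ N / Real.Gamma (α * N + 1)) := by
      intro N
      refine (key N t ⟨ht0, htT⟩).trans ?_
      have e1 : ∑ k ∈ Finset.range N, C₀ * L ^ k * t ^ (α * (k:ℝ)) / Real.Gamma (α * (k:ℝ) + 1)
          = C₀ * ∑ k ∈ Finset.range N, z ^ k / Real.Gamma (α * (k:ℝ) + 1) := by
        rw [Finset.mul_sum]
        exact Finset.sum_congr rfl fun k _ => by rw [← hzp k]; ring
      have e3 : M * L ^ N * t ^ (α * (N:ℝ)) / Real.Gamma (α * (N:ℝ) + 1)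
          = M * (z ^ N / Real.Gamma (α * (N:ℝ) + 1)) := by rw [← hzp N]; ring
      have e2 : ∀ k ∈ Finset.range N,
          D * L ^ k * t ^ (α * ((k:ℝ) + 1)) / Real.Gamma (α * ((k:ℝ) + 1) + 1)
          ≤ (D * t ^ α / Real.Gamma (α + 1)) * (z ^ k / Real.Gamma (α * (k:ℝ) + 1)) := by
        intro k _
        have hΓk : 0 < Real.Gamma (α * (k:ℝ) + 1) :=
          Real.Gamma_pos_of_pos (by positivity)
        have hsub : Real.Gamma (α + 1) * Real.Gamma (α * (k:ℝ) + 1)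
            ≤ Real.Gamma (α * ((k:ℝ) + 1) + 1) := by
          have := Gamma_superadd hα.le (mul_nonneg hα.le (Nat.cast_nonneg k) :
            (0:ℝ) ≤ α * k)
          rwa [show α + α * (k:ℝ) + 1 = α * ((k:ℝ) + 1) + 1 by ring] at this
        have hexp : t ^ (α * ((k:ℝ) + 1)) = t ^ (α * (k:ℝ)) * t ^ α := by
          rw [← Real.rpow_add htpos]; ring_nf
        calc D * L ^ k * t ^ (α * ((k:ℝ) + 1)) / Real.Gamma (α * ((k:ℝ) + 1) + 1)
            = D * z ^ k * t ^ α / Real.Gamma (α * ((k:ℝ) + 1) + 1) := by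
              rw [hexp, ← hzp k]; ring
          _ ≤ D * z ^ k * t ^ α / (Real.Gamma (α + 1) * Real.Gamma (α * (k:ℝ) + 1)) := by
              apply div_le_div_of_nonneg_left _ (by positivity) hsub
              positivity
          _ = (D * t ^ α / Real.Gamma (α + 1)) * (z ^ k / Real.Gamma (α * (k:ℝ) + 1)) := by
              field_simp
      have hS2 : ∑ k ∈ Finset.range N,
            D * L ^ k * t ^ (α * ((k:ℝ) + 1)) / Real.Gamma (α * ((k:ℝ) + 1) + 1)
          ≤ (D * t ^ α / Real.Gamma (α + 1))
            * ∑ k ∈ Finset.range N, z ^ k / Real.Gamma (α * (k:ℝ) + 1) := by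
        rw [Finset.mul_sum]
        exact Finset.sum_le_sum e2
      rw [e1, e3]
      have h1 : C₀ * ∑ k ∈ Finset.range N, z ^ k / Real.Gamma (α * (k:ℝ) + 1)
          ≤ C₀ * mittagLeffler α z :=
        mul_le_mul_of_nonneg_left (hps N) hC₀
      have h2 : (D * t ^ α / Real.Gamma (α + 1))
            * ∑ k ∈ Finset.range N, z ^ k / Real.Gamma (α * (k:ℝ) + 1)
          ≤ (D * t ^ α / Real.Gamma (α + 1)) * mittagLeffler α z :=
        mul_le_mul_of_nonneg_left (hps N) (by positivity)
      have := add_le_add (add_le_add h1 (hS2.trans h2)) (le_refl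
        (M * (z ^ N / Real.Gamma (α * (N:ℝ) + 1))))
      refine this.trans (le_of_eq ?_)
      ring
    have htail : Filter.Tendsto (fun N : ℕ =>
        (C₀ + D * t ^ α / Real.Gamma (α + 1)) * mittagLeffler α z
          + M * (z ^ N / Real.Gamma (α * N + 1))) Filter.atTop
        (nhds ((C₀ + D * t ^ α / Real.Gamma (α + 1)) * mittagLeffler α z + M * 0)) :=
      tendsto_const_nhds.add (hsum.tendsto_atTop_zero.const_mul M)
    have := ge_of_tendsto' htail hbound
    simpa using this
end

section
/- Let Q ∈ ℝ^{n×n} be symmetric positive definite, A ∈ ℝ^{n×n}, ρ, ρ₂, μ₂ > 0. If the matrix −2Q + ρ₂⁻¹Q² + ρ₂(I − ρA)ᵀ(I − ρA) + μ₂Q is negative semidefinite, then for all y, p ∈ ℝⁿ with ‖p‖ ≤ ‖(I − ρA)y‖, we have −2yᵀQy + 2yᵀQp ≤ −μ₂·yᵀQy. -/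
open Matrix

/-- Lyapunov derivative estimate: if −2Q + ρ₂⁻¹Q² + ρ₂(I−ρA)ᵀ(I−ρA) + μ₂Q is
negative semidefinite, then for all y, p with ‖p‖ ≤ ‖(I−ρA)y‖,
−2yᵀQy + 2yᵀQp ≤ −μ₂·yᵀQy. -/
theorem stmt_13 (n : ℕ) (Q A : Matrix (Fin n) (Fin n) ℝ)
    (hQ : Q.PosDef) (ρ ρ₂ μ₂ : ℝ) (hρ : 0 < ρ) (hρ₂ : 0 < ρ₂) (hμ₂ : 0 < μ₂)
    (hNSD : ∀ z : Fin n → ℝ,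
      z ⬝ᵥ ((-2 : ℝ) • Q + ρ₂⁻¹ • Q ^ 2 + ρ₂ • ((1 - ρ • A)ᵀ * (1 - ρ • A))
        + μ₂ • Q).mulVec z ≤ 0) :
    ∀ y p : Fin n → ℝ,
      Real.sqrt (p ⬝ᵥ p) ≤ Real.sqrt (((1 - ρ • A).mulVec y) ⬝ᵥ ((1 - ρ • A).mulVec y)) →
      -2 * (y ⬝ᵥ Q.mulVec y) + 2 * (y ⬝ᵥ Q.mulVec p) ≤ -μ₂ * (y ⬝ᵥ Q.mulVec y) := by
  intro y p hyp
  set M : Matrix (Fin n) (Fin n) ℝ := 1 - ρ • A with hM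
  set u : Fin n → ℝ := Q.mulVec y with hu
  have hQsymm : Qᵀ = Q := hQ.1
  -- p⬝p ≤ (My)⬝(My)
  have h1 : (0:ℝ) ≤ p ⬝ᵥ p := Finset.sum_nonneg fun i _ => mul_self_nonneg _
  have h2 : (0:ℝ) ≤ M.mulVec y ⬝ᵥ M.mulVec y :=
    Finset.sum_nonneg fun i _ => mul_self_nonneg _
  have hP : p ⬝ᵥ p ≤ M.mulVec y ⬝ᵥ M.mulVec y := by
    nlinarith [Real.sq_sqrt h1, Real.sq_sqrt h2, Real.sqrt_nonneg (p ⬝ᵥ p),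
      Real.sqrt_nonneg (M.mulVec y ⬝ᵥ M.mulVec y)]
  -- rewrite quadratic forms
  have key : ∀ w, y ⬝ᵥ Q.mulVec w = u ⬝ᵥ w := by
    intro w
    rw [Matrix.dotProduct_mulVec, hu]
    congr 1
    conv_lhs => rw [← hQsymm, Matrix.vecMul_transpose]
  have hQp : y ⬝ᵥ Q.mulVec p = u ⬝ᵥ p := key p
  have hQ2 : y ⬝ᵥ (Q ^ 2).mulVec y = u ⬝ᵥ u := by
    rw [pow_two, ← Matrix.mulVec_mulVec, key, ← hu]
  have hMT : y ⬝ᵥ (Mᵀ * M).mulVec y = M.mulVec y ⬝ᵥ M.mulVec y := by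
    rw [← Matrix.mulVec_mulVec, Matrix.dotProduct_mulVec, Matrix.vecMul_transpose]
  -- expand hNSD y
  have hN := hNSD y
  simp only [Matrix.add_mulVec, Matrix.smul_mulVec, dotProduct_add,
    dotProduct_smul, smul_eq_mul] at hN
  rw [hQ2, hMT] at hN
  -- Young's inequality
  have hsq : (0:ℝ) ≤ (u - ρ₂ • p) ⬝ᵥ (u - ρ₂ • p) :=
    Finset.sum_nonneg fun i _ => mul_self_nonneg _
  simp only [sub_dotProduct, dotProduct_sub, smul_dotProduct,
    dotProduct_smul, smul_eq_mul, dotProduct_comm p u] at hsq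
  have hYoung : 2 * (u ⬝ᵥ p) ≤ ρ₂⁻¹ * (u ⬝ᵥ u) + ρ₂ * (p ⬝ᵥ p) := by
    have hc : ρ₂ * (ρ₂⁻¹ * (u ⬝ᵥ u)) = u ⬝ᵥ u := by
      field_simp
    rw [← mul_le_mul_iff_right₀ hρ₂, mul_add, hc]
    nlinarith [hsq]
  have hP' := mul_le_mul_of_nonneg_left hP hρ₂.le
  rw [hQp]
  linarith
end
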